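/- Let g = 4 and let B₀ be the positive definite symmetric bilinear form on ℝ⁴ associated to the quadratic form Σ_{i=1}^{4} r_i x_i² + Σ_{1 ≤ i < j ≤ 4, (i,j) ≠ (1,2)} r_{ij} (x_i − x_j)², where all r_i > 0 and all r_{ij} > 0 (i.e. B₀ lies in the relative interior of V₁ ∩ V₂). Then σ = conv{0, s₁, s₂, s₁+s₂, s₁+s₂+s₃, s₁+s₂+s₃+s₄} is a Delaunay cell of B₀, and σ = σ₁₂₃₄ ∪ σ₂₁₃₄, where σ_{abcd} = conv{0, s_a, s_a+s_b, s_a+s_b+s_c, s₁+s₂+s₃+s₄}. Similarly, conv{0, s₁, s₂, s₁+s₂, s₁+s₂+s₄, s₁+s₂+s₃+s₄} = σ₁₂₄₃ ∪ σ₂₁₄₃ is also a Delaunay cell of B₀. -/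

import Mathlib

open Matrix Set

noncomputable section

/-- The standard lattice `ℤ^g` sitting inside `ℝ^g`. -/
def latticePts (g : ℕ) : Set (Fin g → ℝ) :=
  Set.range (fun a : Fin g → ℤ => fun i => (a i : ℝ))

/-- `σ` is a (closed) Delaunay cell of the bilinear form `B`: there is an `α ∈ ℝ^g`
such that `σ` is the convex hull of the lattice points nearest to `α`
(with respect to the distance defined by `B`). -/
def IsDelaunayCell {g : ℕ} (B : (Fin g → ℝ) → (Fin g → ℝ) → ℝ)
    (σ : Set (Fin g → ℝ)) : Prop :=
  ∃ α : Fin g → ℝ, σ = convexHull ℝ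
    {a | a ∈ latticePts g ∧ ∀ b ∈ latticePts g, B (a - α) (a - α) ≤ B (b - α) (b - α)}

/-- `C(0,S)`: the cone generated by `S` over the nonnegative reals. -/
def cone0 {g : ℕ} (S : Set (Fin g → ℝ)) : Set (Fin g → ℝ) :=
  {x | ∃ r : ℝ, 0 ≤ r ∧ ∃ y ∈ convexHull ℝ S, x = r • y}

/-- `Semi(0, S ∩ ℤ^g)`: the additive submonoid generated by the lattice points of `S`. -/
def semi0 {g : ℕ} (S : Set (Fin g → ℝ)) : Set (Fin g → ℝ) :=
  (AddSubmonoid.closure (S ∩ latticePts g) : AddSubmonoid (Fin g → ℝ))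

/-- The standard basis vector `s_i` of `ℝ^g`. -/
def stdV (g : ℕ) (i : Fin g) : Fin g → ℝ := Pi.single i 1

/-- Translation of a subset of `ℝ^g` by a lattice vector `v ∈ ℤ^g`. -/
def zTrans {g : ℕ} (v : Fin g → ℤ) (S : Set (Fin g → ℝ)) : Set (Fin g → ℝ) :=
  (fun x => (fun i => (v i : ℝ)) + x) '' S

/-- The rank-one symmetric matrix of the squared linear form `(c ⬝ x)²`. -/
def sqM (c : Fin 4 → ℝ) : Matrix (Fin 4) (Fin 4) ℝ := vecMulVec c c

/-- The matrix of `Σ rᵢ xᵢ² + Σ_{i<j, (i,j)≠(1,2)} r_{ij} (xᵢ-xⱼ)²`, i.e. a point of the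
relative interior of `V₁ ∩ V₂`. -/
def MV1V2 (r₁ r₂ r₃ r₄ r₁₃ r₁₄ r₂₃ r₂₄ r₃₄ : ℝ) : Matrix (Fin 4) (Fin 4) ℝ :=
  r₁ • sqM (stdV 4 0) + r₂ • sqM (stdV 4 1) + r₃ • sqM (stdV 4 2) + r₄ • sqM (stdV 4 3)
    + r₁₃ • sqM (stdV 4 0 - stdV 4 2) + r₁₄ • sqM (stdV 4 0 - stdV 4 3)
    + r₂₃ • sqM (stdV 4 1 - stdV 4 2) + r₂₄ • sqM (stdV 4 1 - stdV 4 3)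
    + r₃₄ • sqM (stdV 4 2 - stdV 4 3)

/-- The simplex `σ_{abcd} = conv{0, s_a, s_a+s_b, s_a+s_b+s_c, s₁+s₂+s₃+s₄}`. -/
def sigma4 (a b c : Fin 4) : Set (Fin 4 → ℝ) :=
  convexHull ℝ
    {(0 : Fin 4 → ℝ), stdV 4 a, stdV 4 a + stdV 4 b, stdV 4 a + stdV 4 b + stdV 4 c,
      stdV 4 0 + stdV 4 1 + stdV 4 2 + stdV 4 3}

lemma Bform (r₁ r₂ r₃ r₄ r₁₃ r₁₄ r₂₃ r₂₄ r₃₄ : ℝ) (x y : Fin 4 → ℝ) :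
    x ⬝ᵥ (MV1V2 r₁ r₂ r₃ r₄ r₁₃ r₁₄ r₂₃ r₂₄ r₃₄).mulVec y =
      r₁ * (x 0 * y 0) + r₂ * (x 1 * y 1) + r₃ * (x 2 * y 2) + r₄ * (x 3 * y 3)
      + r₁₃ * ((x 0 - x 2) * (y 0 - y 2)) + r₁₄ * ((x 0 - x 3) * (y 0 - y 3))
      + r₂₃ * ((x 1 - x 2) * (y 1 - y 2)) + r₂₄ * ((x 1 - x 3) * (y 1 - y 3))
      + r₃₄ * ((x 2 - x 3) * (y 2 - y 3)) := by
  simp [MV1V2, sqM, stdV, Matrix.mulVec, dotProduct, Fin.sum_univ_four, vecMulVec_apply,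
    Pi.single_apply, Matrix.add_apply, Matrix.smul_apply]
  ring

lemma Msurj (r₁ r₂ r₃ r₄ r₁₃ r₁₄ r₂₃ r₂₄ r₃₄ : ℝ)
    (h₁ : 0 < r₁) (h₂ : 0 < r₂) (h₃ : 0 < r₃) (h₄ : 0 < r₄)
    (h₁₃ : 0 < r₁₃) (h₁₄ : 0 < r₁₄)
    (h₂₃ : 0 < r₂₃) (h₂₄ : 0 < r₂₄) (h₃₄ : 0 < r₃₄) (w : Fin 4 → ℝ) :
    ∃ α : Fin 4 → ℝ, (MV1V2 r₁ r₂ r₃ r₄ r₁₃ r₁₄ r₂₃ r₂₄ r₃₄).mulVec α = w := by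
  set M := MV1V2 r₁ r₂ r₃ r₄ r₁₃ r₁₄ r₂₃ r₂₄ r₃₄
  have hinj : Function.Injective M.mulVecLin := by
    rw [← LinearMap.ker_eq_bot, LinearMap.ker_eq_bot']
    intro x hx
    have hx' : M.mulVec x = 0 := hx
    have h0 : x ⬝ᵥ M.mulVec x = 0 := by rw [hx']; simp
    rw [Bform] at h0
    have t0 : 0 ≤ r₁ * (x 0 * x 0) := mul_nonneg h₁.le (mul_self_nonneg _)
    have t1 : 0 ≤ r₂ * (x 1 * x 1) := mul_nonneg h₂.le (mul_self_nonneg _)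
    have t2 : 0 ≤ r₃ * (x 2 * x 2) := mul_nonneg h₃.le (mul_self_nonneg _)
    have t3 : 0 ≤ r₄ * (x 3 * x 3) := mul_nonneg h₄.le (mul_self_nonneg _)
    have t4 : 0 ≤ r₁₃ * ((x 0 - x 2) * (x 0 - x 2)) := mul_nonneg h₁₃.le (mul_self_nonneg _)
    have t5 : 0 ≤ r₁₄ * ((x 0 - x 3) * (x 0 - x 3)) := mul_nonneg h₁₄.le (mul_self_nonneg _)
    have t6 : 0 ≤ r₂₃ * ((x 1 - x 2) * (x 1 - x 2)) := mul_nonneg h₂₃.le (mul_self_nonneg _)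
    have t7 : 0 ≤ r₂₄ * ((x 1 - x 3) * (x 1 - x 3)) := mul_nonneg h₂₄.le (mul_self_nonneg _)
    have t8 : 0 ≤ r₃₄ * ((x 2 - x 3) * (x 2 - x 3)) := mul_nonneg h₃₄.le (mul_self_nonneg _)
    have z0 : r₁ * (x 0 * x 0) = 0 := by linarith
    have e1 : x 0 = 0 := mul_self_eq_zero.mp ((mul_eq_zero.mp z0).resolve_left h₁.ne')
    have z1 : r₂ * (x 1 * x 1) = 0 := by linarith
    have e2 : x 1 = 0 := mul_self_eq_zero.mp ((mul_eq_zero.mp z1).resolve_left h₂.ne')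
    have z2 : r₃ * (x 2 * x 2) = 0 := by linarith
    have e3 : x 2 = 0 := mul_self_eq_zero.mp ((mul_eq_zero.mp z2).resolve_left h₃.ne')
    have z3 : r₄ * (x 3 * x 3) = 0 := by linarith
    have e4 : x 3 = 0 := mul_self_eq_zero.mp ((mul_eq_zero.mp z3).resolve_left h₄.ne')
    funext i; fin_cases i <;> simpa
  have hsurj : Function.Surjective M.mulVecLin :=
    (LinearMap.injective_iff_surjective).mp hinj
  obtain ⟨α, hα⟩ := hsurj w
  exact ⟨α, by simpa using hα⟩

/-- weight vector; ε = 1 for cell 1, ε = -1 for cell 2 -/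
def wVec (r₁ r₂ r₃ r₄ r₁₃ r₁₄ r₂₃ r₂₄ r₃₄ ε : ℝ) : Fin 4 → ℝ :=
  ![r₁ + r₁₃ + r₁₄, r₂ + r₂₃ + r₂₄, r₃ - r₁₃ - r₂₃ + ε * r₃₄, r₄ - r₁₄ - r₂₄ - ε * r₃₄]

def Ffun (r₁ r₂ r₃ r₄ r₁₃ r₁₄ r₂₃ r₂₄ r₃₄ ε : ℝ) (x : Fin 4 → ℝ) : ℝ :=
  x ⬝ᵥ (MV1V2 r₁ r₂ r₃ r₄ r₁₃ r₁₄ r₂₃ r₂₄ r₃₄).mulVec x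
    - (wVec r₁ r₂ r₃ r₄ r₁₃ r₁₄ r₂₃ r₂₄ r₃₄ ε) ⬝ᵥ x

lemma Fexpand (r₁ r₂ r₃ r₄ r₁₃ r₁₄ r₂₃ r₂₄ r₃₄ ε : ℝ) (hε : ε = 1 ∨ ε = -1)
    (x : Fin 4 → ℝ) :
    Ffun r₁ r₂ r₃ r₄ r₁₃ r₁₄ r₂₃ r₂₄ r₃₄ ε x =
      r₁ * (x 0 * (x 0 - 1)) + r₂ * (x 1 * (x 1 - 1)) + r₃ * (x 2 * (x 2 - 1))
      + r₄ * (x 3 * (x 3 - 1))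
      + r₁₃ * ((x 0 - x 2) * ((x 0 - x 2) - 1)) + r₁₄ * ((x 0 - x 3) * ((x 0 - x 3) - 1))
      + r₂₃ * ((x 1 - x 2) * ((x 1 - x 2) - 1)) + r₂₄ * ((x 1 - x 3) * ((x 1 - x 3) - 1))
      + r₃₄ * ((ε * (x 2 - x 3)) * ((ε * (x 2 - x 3)) - 1)) := by
  unfold Ffun wVec
  rw [Bform]
  rcases hε with h | h <;> subst h <;>
    simp [dotProduct, Fin.sum_univ_four] <;> ring

lemma Msymm (r₁ r₂ r₃ r₄ r₁₃ r₁₄ r₂₃ r₂₄ r₃₄ : ℝ) (x y : Fin 4 → ℝ) :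
    x ⬝ᵥ (MV1V2 r₁ r₂ r₃ r₄ r₁₃ r₁₄ r₂₃ r₂₄ r₃₄).mulVec y
      = y ⬝ᵥ (MV1V2 r₁ r₂ r₃ r₄ r₁₃ r₁₄ r₂₃ r₂₄ r₃₄).mulVec x := by
  rw [Bform, Bform]; ring

lemma Gkey (r₁ r₂ r₃ r₄ r₁₃ r₁₄ r₂₃ r₂₄ r₃₄ ε : ℝ) (α : Fin 4 → ℝ)
    (hα : (MV1V2 r₁ r₂ r₃ r₄ r₁₃ r₁₄ r₂₃ r₂₄ r₃₄).mulVec α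
      = (1/2 : ℝ) • wVec r₁ r₂ r₃ r₄ r₁₃ r₁₄ r₂₃ r₂₄ r₃₄ ε) (x : Fin 4 → ℝ) :
    (x - α) ⬝ᵥ (MV1V2 r₁ r₂ r₃ r₄ r₁₃ r₁₄ r₂₃ r₂₄ r₃₄).mulVec (x - α)
      = Ffun r₁ r₂ r₃ r₄ r₁₃ r₁₄ r₂₃ r₂₄ r₃₄ ε x
        + α ⬝ᵥ (MV1V2 r₁ r₂ r₃ r₄ r₁₃ r₁₄ r₂₃ r₂₄ r₃₄).mulVec α := by
  set M := MV1V2 r₁ r₂ r₃ r₄ r₁₃ r₁₄ r₂₃ r₂₄ r₃₄ with hM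
  have h1 : α ⬝ᵥ M.mulVec x = x ⬝ᵥ M.mulVec α := Msymm _ _ _ _ _ _ _ _ _ _ _
  have h2 : x ⬝ᵥ M.mulVec α
      = (1/2 : ℝ) * (wVec r₁ r₂ r₃ r₄ r₁₃ r₁₄ r₂₃ r₂₄ r₃₄ ε ⬝ᵥ x) := by
    rw [hα, dotProduct_smul, smul_eq_mul, dotProduct_comm]
  rw [Matrix.mulVec_sub, dotProduct_sub, sub_dotProduct, sub_dotProduct]
  unfold Ffun
  rw [← hM, h1, h2]
  ring

lemma intNN (n : ℤ) : 0 ≤ (n : ℝ) * ((n : ℝ) - 1) := by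
  rcases le_or_gt n 0 with h | h
  · have h1 : (n : ℝ) ≤ 0 := by exact_mod_cast h
    nlinarith
  · have h1 : (1 : ℝ) ≤ (n : ℝ) := by exact_mod_cast h
    nlinarith

lemma intZ (n : ℤ) (h : (n : ℝ) * ((n : ℝ) - 1) = 0) : n = 0 ∨ n = 1 := by
  rcases mul_eq_zero.mp h with h' | h'
  · left; exact_mod_cast h'
  · right
    have : (n : ℝ) = 1 := by linarith
    exact_mod_cast this


lemma nineNN {t1 t2 t3 t4 t5 t6 t7 t8 t9 : ℝ} (k1 : 0 ≤ t1) (k2 : 0 ≤ t2) (k3 : 0 ≤ t3)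
    (k4 : 0 ≤ t4) (k5 : 0 ≤ t5) (k6 : 0 ≤ t6) (k7 : 0 ≤ t7) (k8 : 0 ≤ t8) (k9 : 0 ≤ t9) :
    0 ≤ t1 + t2 + t3 + t4 + t5 + t6 + t7 + t8 + t9 := by linarith

lemma nineZ {t1 t2 t3 t4 t5 t6 t7 t8 t9 : ℝ} (k1 : 0 ≤ t1) (k2 : 0 ≤ t2) (k3 : 0 ≤ t3)
    (k4 : 0 ≤ t4) (k5 : 0 ≤ t5) (k6 : 0 ≤ t6) (k7 : 0 ≤ t7) (k8 : 0 ≤ t8) (k9 : 0 ≤ t9)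
    (h : t1 + t2 + t3 + t4 + t5 + t6 + t7 + t8 + t9 = 0) :
    t1 = 0 ∧ t2 = 0 ∧ t3 = 0 ∧ t4 = 0 ∧ t5 = 0 ∧ t6 = 0 ∧ t7 = 0 ∧ t8 = 0 ∧ t9 = 0 := by
  refine ⟨by linarith, by linarith, by linarith, by linarith, by linarith, by linarith,
    by linarith, by linarith, by linarith⟩

section

variable (r₁ r₂ r₃ r₄ r₁₃ r₁₄ r₂₃ r₂₄ r₃₄ : ℝ)
  (h₁ : 0 < r₁) (h₂ : 0 < r₂) (h₃ : 0 < r₃) (h₄ : 0 < r₄)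
  (h₁₃ : 0 < r₁₃) (h₁₄ : 0 < r₁₄) (h₂₃ : 0 < r₂₃) (h₂₄ : 0 < r₂₄) (h₃₄ : 0 < r₃₄)

lemma Fcast1 (A : Fin 4 → ℤ) :
    Ffun r₁ r₂ r₃ r₄ r₁₃ r₁₄ r₂₃ r₂₄ r₃₄ 1 (fun i => (A i : ℝ)) =
      r₁ * ((A 0 : ℝ) * ((A 0 : ℝ) - 1)) + r₂ * ((A 1 : ℝ) * ((A 1 : ℝ) - 1))
      + r₃ * ((A 2 : ℝ) * ((A 2 : ℝ) - 1)) + r₄ * ((A 3 : ℝ) * ((A 3 : ℝ) - 1))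
      + r₁₃ * (((A 0 - A 2 : ℤ) : ℝ) * (((A 0 - A 2 : ℤ) : ℝ) - 1))
      + r₁₄ * (((A 0 - A 3 : ℤ) : ℝ) * (((A 0 - A 3 : ℤ) : ℝ) - 1))
      + r₂₃ * (((A 1 - A 2 : ℤ) : ℝ) * (((A 1 - A 2 : ℤ) : ℝ) - 1))
      + r₂₄ * (((A 1 - A 3 : ℤ) : ℝ) * (((A 1 - A 3 : ℤ) : ℝ) - 1))
      + r₃₄ * (((A 2 - A 3 : ℤ) : ℝ) * (((A 2 - A 3 : ℤ) : ℝ) - 1)) := by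
  rw [Fexpand _ _ _ _ _ _ _ _ _ _ (Or.inl rfl)]
  push_cast
  ring

include h₁ h₂ h₃ h₄ h₁₃ h₁₄ h₂₃ h₂₄ h₃₄ in
lemma Fnn1 (A : Fin 4 → ℤ) :
    0 ≤ Ffun r₁ r₂ r₃ r₄ r₁₃ r₁₄ r₂₃ r₂₄ r₃₄ 1 (fun i => (A i : ℝ)) := by
  rw [Fcast1]
  have k1 := mul_nonneg h₁.le (intNN (A 0))
  have k2 := mul_nonneg h₂.le (intNN (A 1))
  have k3 := mul_nonneg h₃.le (intNN (A 2))
  have k4 := mul_nonneg h₄.le (intNN (A 3))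
  have k5 := mul_nonneg h₁₃.le (intNN (A 0 - A 2))
  have k6 := mul_nonneg h₁₄.le (intNN (A 0 - A 3))
  have k7 := mul_nonneg h₂₃.le (intNN (A 1 - A 2))
  have k8 := mul_nonneg h₂₄.le (intNN (A 1 - A 3))
  have k9 := mul_nonneg h₃₄.le (intNN (A 2 - A 3))
  exact nineNN k1 k2 k3 k4 k5 k6 k7 k8 k9

include h₁ h₂ h₃ h₄ h₁₃ h₁₄ h₂₃ h₂₄ h₃₄ in
set_option maxHeartbeats 800000 in
lemma Fz1 (A : Fin 4 → ℤ)
    (h : Ffun r₁ r₂ r₃ r₄ r₁₃ r₁₄ r₂₃ r₂₄ r₃₄ 1 (fun i => (A i : ℝ)) = 0) :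
    (A 0 = 0 ∧ A 1 = 0 ∧ A 2 = 0 ∧ A 3 = 0) ∨
    (A 0 = 1 ∧ A 1 = 0 ∧ A 2 = 0 ∧ A 3 = 0) ∨
    (A 0 = 0 ∧ A 1 = 1 ∧ A 2 = 0 ∧ A 3 = 0) ∨
    (A 0 = 1 ∧ A 1 = 1 ∧ A 2 = 0 ∧ A 3 = 0) ∨
    (A 0 = 1 ∧ A 1 = 1 ∧ A 2 = 1 ∧ A 3 = 0) ∨
    (A 0 = 1 ∧ A 1 = 1 ∧ A 2 = 1 ∧ A 3 = 1) := by
  rw [Fcast1] at h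
  have k1 := mul_nonneg h₁.le (intNN (A 0))
  have k2 := mul_nonneg h₂.le (intNN (A 1))
  have k3 := mul_nonneg h₃.le (intNN (A 2))
  have k4 := mul_nonneg h₄.le (intNN (A 3))
  have k5 := mul_nonneg h₁₃.le (intNN (A 0 - A 2))
  have k6 := mul_nonneg h₁₄.le (intNN (A 0 - A 3))
  have k7 := mul_nonneg h₂₃.le (intNN (A 1 - A 2))
  have k8 := mul_nonneg h₂₄.le (intNN (A 1 - A 3))
  have k9 := mul_nonneg h₃₄.le (intNN (A 2 - A 3))
  obtain ⟨z1, z2, z3, z4, z5, z6, z7, z8, z9⟩ := nineZ k1 k2 k3 k4 k5 k6 k7 k8 k9 h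
  have d1 : A 0 = 0 ∨ A 0 = 1 := intZ _ ((mul_eq_zero.mp z1).resolve_left h₁.ne')
  have d2 : A 1 = 0 ∨ A 1 = 1 := intZ _ ((mul_eq_zero.mp z2).resolve_left h₂.ne')
  have d3 : A 2 = 0 ∨ A 2 = 1 := intZ _ ((mul_eq_zero.mp z3).resolve_left h₃.ne')
  have d4 : A 3 = 0 ∨ A 3 = 1 := intZ _ ((mul_eq_zero.mp z4).resolve_left h₄.ne')
  have d5 : A 0 - A 2 = 0 ∨ A 0 - A 2 = 1 := intZ _ ((mul_eq_zero.mp z5).resolve_left h₁₃.ne')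
  have d6 : A 0 - A 3 = 0 ∨ A 0 - A 3 = 1 := intZ _ ((mul_eq_zero.mp z6).resolve_left h₁₄.ne')
  have d7 : A 1 - A 2 = 0 ∨ A 1 - A 2 = 1 := intZ _ ((mul_eq_zero.mp z7).resolve_left h₂₃.ne')
  have d8 : A 1 - A 3 = 0 ∨ A 1 - A 3 = 1 := intZ _ ((mul_eq_zero.mp z8).resolve_left h₂₄.ne')
  have d9 : A 2 - A 3 = 0 ∨ A 2 - A 3 = 1 := intZ _ ((mul_eq_zero.mp z9).resolve_left h₃₄.ne')
  rcases d1 with e1|e1 <;> rcases d2 with e2|e2 <;> rcases d3 with e3|e3 <;>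
    rcases d4 with e4|e4 <;> omega
end

-- integer representatives of the six vertices of cell 1
def Z0 : Fin 4 → ℤ := ![0,0,0,0]
def Z1 : Fin 4 → ℤ := ![1,0,0,0]
def Z2 : Fin 4 → ℤ := ![0,1,0,0]
def Z3 : Fin 4 → ℤ := ![1,1,0,0]
def Z4 : Fin 4 → ℤ := ![1,1,1,0]
def Z4' : Fin 4 → ℤ := ![1,1,0,1]
def Z5 : Fin 4 → ℤ := ![1,1,1,1]

lemma castZ0 : (fun i => ((Z0 i : ℝ))) = (0 : Fin 4 → ℝ) := by
  funext i; fin_cases i <;> simp [Z0]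
lemma castZ1 : (fun i => ((Z1 i : ℝ))) = stdV 4 0 := by
  funext i; fin_cases i <;> simp [Z1, stdV] <;> norm_num [Pi.single_apply]
lemma castZ2 : (fun i => ((Z2 i : ℝ))) = stdV 4 1 := by
  funext i; fin_cases i <;> simp [Z2, stdV] <;> norm_num [Pi.single_apply]
lemma castZ3 : (fun i => ((Z3 i : ℝ))) = stdV 4 0 + stdV 4 1 := by
  funext i; fin_cases i <;> simp [Z3, stdV] <;> norm_num [Pi.single_apply]
lemma castZ4 : (fun i => ((Z4 i : ℝ))) = stdV 4 0 + stdV 4 1 + stdV 4 2 := by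
  funext i; fin_cases i <;> simp [Z4, stdV] <;> norm_num [Pi.single_apply]
lemma castZ4' : (fun i => ((Z4' i : ℝ))) = stdV 4 0 + stdV 4 1 + stdV 4 3 := by
  funext i; fin_cases i <;> simp [Z4', stdV] <;> norm_num [Pi.single_apply]
lemma castZ5 : (fun i => ((Z5 i : ℝ))) = stdV 4 0 + stdV 4 1 + stdV 4 2 + stdV 4 3 := by
  funext i; fin_cases i <;> simp [Z5, stdV] <;> norm_num [Pi.single_apply]

section
variable (r₁ r₂ r₃ r₄ r₁₃ r₁₄ r₂₃ r₂₄ r₃₄ : ℝ)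
  (h₁ : 0 < r₁) (h₂ : 0 < r₂) (h₃ : 0 < r₃) (h₄ : 0 < r₄)
  (h₁₃ : 0 < r₁₃) (h₁₄ : 0 < r₁₄) (h₂₃ : 0 < r₂₃) (h₂₄ : 0 < r₂₄) (h₃₄ : 0 < r₃₄)

include h₁ h₂ h₃ h₄ h₁₃ h₁₄ h₂₃ h₂₄ h₃₄ in
lemma minset1 (α : Fin 4 → ℝ)
    (hα : (MV1V2 r₁ r₂ r₃ r₄ r₁₃ r₁₄ r₂₃ r₂₄ r₃₄).mulVec α
      = (1/2 : ℝ) • wVec r₁ r₂ r₃ r₄ r₁₃ r₁₄ r₂₃ r₂₄ r₃₄ 1) :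
    {a | a ∈ latticePts 4 ∧ ∀ b ∈ latticePts 4,
        (a - α) ⬝ᵥ (MV1V2 r₁ r₂ r₃ r₄ r₁₃ r₁₄ r₂₃ r₂₄ r₃₄).mulVec (a - α)
          ≤ (b - α) ⬝ᵥ (MV1V2 r₁ r₂ r₃ r₄ r₁₃ r₁₄ r₂₃ r₂₄ r₃₄).mulVec (b - α)} =
    ({0, stdV 4 0, stdV 4 1, stdV 4 0 + stdV 4 1,
      stdV 4 0 + stdV 4 1 + stdV 4 2,
      stdV 4 0 + stdV 4 1 + stdV 4 2 + stdV 4 3} : Set (Fin 4 → ℝ)) := by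
  have key := Gkey r₁ r₂ r₃ r₄ r₁₃ r₁₄ r₂₃ r₂₄ r₃₄ 1 α hα
  have FZ0 : Ffun r₁ r₂ r₃ r₄ r₁₃ r₁₄ r₂₃ r₂₄ r₃₄ 1 (fun i => ((Z0 i : ℝ))) = 0 := by
    rw [Fcast1]; norm_num [Z0, Matrix.cons_val_two, Matrix.cons_val_three]
  have FZ1 : Ffun r₁ r₂ r₃ r₄ r₁₃ r₁₄ r₂₃ r₂₄ r₃₄ 1 (fun i => ((Z1 i : ℝ))) = 0 := by
    rw [Fcast1]; norm_num [Z1, Matrix.cons_val_two, Matrix.cons_val_three]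
  have FZ2 : Ffun r₁ r₂ r₃ r₄ r₁₃ r₁₄ r₂₃ r₂₄ r₃₄ 1 (fun i => ((Z2 i : ℝ))) = 0 := by
    rw [Fcast1]; norm_num [Z2, Matrix.cons_val_two, Matrix.cons_val_three]
  have FZ3 : Ffun r₁ r₂ r₃ r₄ r₁₃ r₁₄ r₂₃ r₂₄ r₃₄ 1 (fun i => ((Z3 i : ℝ))) = 0 := by
    rw [Fcast1]; norm_num [Z3, Matrix.cons_val_two, Matrix.cons_val_three]
  have FZ4 : Ffun r₁ r₂ r₃ r₄ r₁₃ r₁₄ r₂₃ r₂₄ r₃₄ 1 (fun i => ((Z4 i : ℝ))) = 0 := by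
    rw [Fcast1]; norm_num [Z4, Matrix.cons_val_two, Matrix.cons_val_three]
  have FZ5 : Ffun r₁ r₂ r₃ r₄ r₁₃ r₁₄ r₂₃ r₂₄ r₃₄ 1 (fun i => ((Z5 i : ℝ))) = 0 := by
    rw [Fcast1]; norm_num [Z5, Matrix.cons_val_two, Matrix.cons_val_three]
  ext a
  simp only [Set.mem_setOf_eq, Set.mem_insert_iff, Set.mem_singleton_iff]
  constructor
  · rintro ⟨⟨A, rfl⟩, hmin⟩
    have h0mem : (fun i => ((Z0 i : ℝ))) ∈ latticePts 4 := ⟨Z0, rfl⟩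
    have hle := hmin _ h0mem
    rw [key, key] at hle
    have hFa : Ffun r₁ r₂ r₃ r₄ r₁₃ r₁₄ r₂₃ r₂₄ r₃₄ 1 (fun i => ((A i : ℝ))) = 0 :=
      le_antisymm (by linarith)
        (Fnn1 r₁ r₂ r₃ r₄ r₁₃ r₁₄ r₂₃ r₂₄ r₃₄ h₁ h₂ h₃ h₄ h₁₃ h₁₄ h₂₃ h₂₄ h₃₄ A)
    rcases Fz1 r₁ r₂ r₃ r₄ r₁₃ r₁₄ r₂₃ r₂₄ r₃₄ h₁ h₂ h₃ h₄ h₁₃ h₁₄ h₂₃ h₂₄ h₃₄ A hFa with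
      ⟨e1,e2,e3,e4⟩|⟨e1,e2,e3,e4⟩|⟨e1,e2,e3,e4⟩|⟨e1,e2,e3,e4⟩|⟨e1,e2,e3,e4⟩|⟨e1,e2,e3,e4⟩
    · exact Or.inl (by rw [← castZ0]; funext i; fin_cases i <;> simp [Z0, e1, e2, e3, e4])
    · exact Or.inr (Or.inl (by rw [← castZ1]; funext i; fin_cases i <;> simp [Z1, e1, e2, e3, e4]))
    · exact Or.inr (Or.inr (Or.inl (by
        rw [← castZ2]; funext i; fin_cases i <;> simp [Z2, e1, e2, e3, e4])))
    · exact Or.inr (Or.inr (Or.inr (Or.inl (by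
        rw [← castZ3]; funext i; fin_cases i <;> simp [Z3, e1, e2, e3, e4]))))
    · exact Or.inr (Or.inr (Or.inr (Or.inr (Or.inl (by
        rw [← castZ4]; funext i; fin_cases i <;> simp [Z4, e1, e2, e3, e4])))))
    · exact Or.inr (Or.inr (Or.inr (Or.inr (Or.inr (by
        rw [← castZ5]; funext i; fin_cases i <;> simp [Z5, e1, e2, e3, e4])))))
  · intro hv
    have main : ∀ (Zk : Fin 4 → ℤ),
        Ffun r₁ r₂ r₃ r₄ r₁₃ r₁₄ r₂₃ r₂₄ r₃₄ 1 (fun i => ((Zk i : ℝ))) = 0 →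
        a = (fun i => ((Zk i : ℝ))) →
        a ∈ latticePts 4 ∧ ∀ b ∈ latticePts 4,
          (a - α) ⬝ᵥ (MV1V2 r₁ r₂ r₃ r₄ r₁₃ r₁₄ r₂₃ r₂₄ r₃₄).mulVec (a - α)
            ≤ (b - α) ⬝ᵥ (MV1V2 r₁ r₂ r₃ r₄ r₁₃ r₁₄ r₂₃ r₂₄ r₃₄).mulVec (b - α) := by
      rintro Zk hFz rfl
      refine ⟨⟨Zk, rfl⟩, ?_⟩
      rintro b ⟨B, rfl⟩
      rw [key, key, hFz]
      have := Fnn1 r₁ r₂ r₃ r₄ r₁₃ r₁₄ r₂₃ r₂₄ r₃₄ h₁ h₂ h₃ h₄ h₁₃ h₁₄ h₂₃ h₂₄ h₃₄ B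
      linarith
    rcases hv with rfl|rfl|rfl|rfl|rfl|rfl
    · exact main Z0 FZ0 castZ0.symm
    · exact main Z1 FZ1 castZ1.symm
    · exact main Z2 FZ2 castZ2.symm
    · exact main Z3 FZ3 castZ3.symm
    · exact main Z4 FZ4 castZ4.symm
    · exact main Z5 FZ5 castZ5.symm
end

section
variable (r₁ r₂ r₃ r₄ r₁₃ r₁₄ r₂₃ r₂₄ r₃₄ : ℝ)
  (h₁ : 0 < r₁) (h₂ : 0 < r₂) (h₃ : 0 < r₃) (h₄ : 0 < r₄)
  (h₁₃ : 0 < r₁₃) (h₁₄ : 0 < r₁₄) (h₂₃ : 0 < r₂₃) (h₂₄ : 0 < r₂₄) (h₃₄ : 0 < r₃₄)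

lemma Fcast2 (A : Fin 4 → ℤ) :
    Ffun r₁ r₂ r₃ r₄ r₁₃ r₁₄ r₂₃ r₂₄ r₃₄ (-1) (fun i => (A i : ℝ)) =
      r₁ * ((A 0 : ℝ) * ((A 0 : ℝ) - 1)) + r₂ * ((A 1 : ℝ) * ((A 1 : ℝ) - 1))
      + r₃ * ((A 2 : ℝ) * ((A 2 : ℝ) - 1)) + r₄ * ((A 3 : ℝ) * ((A 3 : ℝ) - 1))
      + r₁₃ * (((A 0 - A 2 : ℤ) : ℝ) * (((A 0 - A 2 : ℤ) : ℝ) - 1))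
      + r₁₄ * (((A 0 - A 3 : ℤ) : ℝ) * (((A 0 - A 3 : ℤ) : ℝ) - 1))
      + r₂₃ * (((A 1 - A 2 : ℤ) : ℝ) * (((A 1 - A 2 : ℤ) : ℝ) - 1))
      + r₂₄ * (((A 1 - A 3 : ℤ) : ℝ) * (((A 1 - A 3 : ℤ) : ℝ) - 1))
      + r₃₄ * (((A 3 - A 2 : ℤ) : ℝ) * (((A 3 - A 2 : ℤ) : ℝ) - 1)) := by
  rw [Fexpand _ _ _ _ _ _ _ _ _ _ (Or.inr rfl)]
  push_cast
  ring


include h₁ h₂ h₃ h₄ h₁₃ h₁₄ h₂₃ h₂₄ h₃₄ in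
lemma Fnn2 (A : Fin 4 → ℤ) :
    0 ≤ Ffun r₁ r₂ r₃ r₄ r₁₃ r₁₄ r₂₃ r₂₄ r₃₄ (-1) (fun i => (A i : ℝ)) := by
  rw [Fcast2]
  have k1 := mul_nonneg h₁.le (intNN (A 0))
  have k2 := mul_nonneg h₂.le (intNN (A 1))
  have k3 := mul_nonneg h₃.le (intNN (A 2))
  have k4 := mul_nonneg h₄.le (intNN (A 3))
  have k5 := mul_nonneg h₁₃.le (intNN (A 0 - A 2))
  have k6 := mul_nonneg h₁₄.le (intNN (A 0 - A 3))
  have k7 := mul_nonneg h₂₃.le (intNN (A 1 - A 2))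
  have k8 := mul_nonneg h₂₄.le (intNN (A 1 - A 3))
  have k9 := mul_nonneg h₃₄.le (intNN (A 3 - A 2))
  exact nineNN k1 k2 k3 k4 k5 k6 k7 k8 k9


include h₁ h₂ h₃ h₄ h₁₃ h₁₄ h₂₃ h₂₄ h₃₄ in
set_option maxHeartbeats 800000 in
lemma Fz2 (A : Fin 4 → ℤ)
    (h : Ffun r₁ r₂ r₃ r₄ r₁₃ r₁₄ r₂₃ r₂₄ r₃₄ (-1) (fun i => (A i : ℝ)) = 0) :
    (A 0 = 0 ∧ A 1 = 0 ∧ A 2 = 0 ∧ A 3 = 0) ∨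
    (A 0 = 1 ∧ A 1 = 0 ∧ A 2 = 0 ∧ A 3 = 0) ∨
    (A 0 = 0 ∧ A 1 = 1 ∧ A 2 = 0 ∧ A 3 = 0) ∨
    (A 0 = 1 ∧ A 1 = 1 ∧ A 2 = 0 ∧ A 3 = 0) ∨
    (A 0 = 1 ∧ A 1 = 1 ∧ A 2 = 0 ∧ A 3 = 1) ∨
    (A 0 = 1 ∧ A 1 = 1 ∧ A 2 = 1 ∧ A 3 = 1) := by
  rw [Fcast2] at h
  have k1 := mul_nonneg h₁.le (intNN (A 0))
  have k2 := mul_nonneg h₂.le (intNN (A 1))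
  have k3 := mul_nonneg h₃.le (intNN (A 2))
  have k4 := mul_nonneg h₄.le (intNN (A 3))
  have k5 := mul_nonneg h₁₃.le (intNN (A 0 - A 2))
  have k6 := mul_nonneg h₁₄.le (intNN (A 0 - A 3))
  have k7 := mul_nonneg h₂₃.le (intNN (A 1 - A 2))
  have k8 := mul_nonneg h₂₄.le (intNN (A 1 - A 3))
  have k9 := mul_nonneg h₃₄.le (intNN (A 3 - A 2))
  obtain ⟨z1, z2, z3, z4, z5, z6, z7, z8, z9⟩ := nineZ k1 k2 k3 k4 k5 k6 k7 k8 k9 h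
  have d1 : A 0 = 0 ∨ A 0 = 1 := intZ _ ((mul_eq_zero.mp z1).resolve_left h₁.ne')
  have d2 : A 1 = 0 ∨ A 1 = 1 := intZ _ ((mul_eq_zero.mp z2).resolve_left h₂.ne')
  have d3 : A 2 = 0 ∨ A 2 = 1 := intZ _ ((mul_eq_zero.mp z3).resolve_left h₃.ne')
  have d4 : A 3 = 0 ∨ A 3 = 1 := intZ _ ((mul_eq_zero.mp z4).resolve_left h₄.ne')
  have d5 : A 0 - A 2 = 0 ∨ A 0 - A 2 = 1 := intZ _ ((mul_eq_zero.mp z5).resolve_left h₁₃.ne')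
  have d6 : A 0 - A 3 = 0 ∨ A 0 - A 3 = 1 := intZ _ ((mul_eq_zero.mp z6).resolve_left h₁₄.ne')
  have d7 : A 1 - A 2 = 0 ∨ A 1 - A 2 = 1 := intZ _ ((mul_eq_zero.mp z7).resolve_left h₂₃.ne')
  have d8 : A 1 - A 3 = 0 ∨ A 1 - A 3 = 1 := intZ _ ((mul_eq_zero.mp z8).resolve_left h₂₄.ne')
  have d9 : A 3 - A 2 = 0 ∨ A 3 - A 2 = 1 := intZ _ ((mul_eq_zero.mp z9).resolve_left h₃₄.ne')
  rcases d1 with e1|e1 <;> rcases d2 with e2|e2 <;> rcases d3 with e3|e3 <;>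
    rcases d4 with e4|e4 <;> omega
include h₁ h₂ h₃ h₄ h₁₃ h₁₄ h₂₃ h₂₄ h₃₄ in
lemma minset2 (α : Fin 4 → ℝ)
    (hα : (MV1V2 r₁ r₂ r₃ r₄ r₁₃ r₁₄ r₂₃ r₂₄ r₃₄).mulVec α
      = (1/2 : ℝ) • wVec r₁ r₂ r₃ r₄ r₁₃ r₁₄ r₂₃ r₂₄ r₃₄ (-1)) :
    {a | a ∈ latticePts 4 ∧ ∀ b ∈ latticePts 4,
        (a - α) ⬝ᵥ (MV1V2 r₁ r₂ r₃ r₄ r₁₃ r₁₄ r₂₃ r₂₄ r₃₄).mulVec (a - α)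
          ≤ (b - α) ⬝ᵥ (MV1V2 r₁ r₂ r₃ r₄ r₁₃ r₁₄ r₂₃ r₂₄ r₃₄).mulVec (b - α)} =
    ({0, stdV 4 0, stdV 4 1, stdV 4 0 + stdV 4 1,
      stdV 4 0 + stdV 4 1 + stdV 4 3,
      stdV 4 0 + stdV 4 1 + stdV 4 2 + stdV 4 3} : Set (Fin 4 → ℝ)) := by
  have key := Gkey r₁ r₂ r₃ r₄ r₁₃ r₁₄ r₂₃ r₂₄ r₃₄ (-1) α hα
  have FZ0 : Ffun r₁ r₂ r₃ r₄ r₁₃ r₁₄ r₂₃ r₂₄ r₃₄ (-1) (fun i => ((Z0 i : ℝ))) = 0 := by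
    rw [Fcast2]; norm_num [Z0, Matrix.cons_val_two, Matrix.cons_val_three]
  have FZ1 : Ffun r₁ r₂ r₃ r₄ r₁₃ r₁₄ r₂₃ r₂₄ r₃₄ (-1) (fun i => ((Z1 i : ℝ))) = 0 := by
    rw [Fcast2]; norm_num [Z1, Matrix.cons_val_two, Matrix.cons_val_three]
  have FZ2 : Ffun r₁ r₂ r₃ r₄ r₁₃ r₁₄ r₂₃ r₂₄ r₃₄ (-1) (fun i => ((Z2 i : ℝ))) = 0 := by
    rw [Fcast2]; norm_num [Z2, Matrix.cons_val_two, Matrix.cons_val_three]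
  have FZ3 : Ffun r₁ r₂ r₃ r₄ r₁₃ r₁₄ r₂₃ r₂₄ r₃₄ (-1) (fun i => ((Z3 i : ℝ))) = 0 := by
    rw [Fcast2]; norm_num [Z3, Matrix.cons_val_two, Matrix.cons_val_three]
  have FZ4' : Ffun r₁ r₂ r₃ r₄ r₁₃ r₁₄ r₂₃ r₂₄ r₃₄ (-1) (fun i => ((Z4' i : ℝ))) = 0 := by
    rw [Fcast2]; norm_num [Z4', Matrix.cons_val_two, Matrix.cons_val_three]
  have FZ5 : Ffun r₁ r₂ r₃ r₄ r₁₃ r₁₄ r₂₃ r₂₄ r₃₄ (-1) (fun i => ((Z5 i : ℝ))) = 0 := by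
    rw [Fcast2]; norm_num [Z5, Matrix.cons_val_two, Matrix.cons_val_three]
  ext a
  simp only [Set.mem_setOf_eq, Set.mem_insert_iff, Set.mem_singleton_iff]
  constructor
  · rintro ⟨⟨A, rfl⟩, hmin⟩
    have h0mem : (fun i => ((Z0 i : ℝ))) ∈ latticePts 4 := ⟨Z0, rfl⟩
    have hle := hmin _ h0mem
    rw [key, key] at hle
    have hFa : Ffun r₁ r₂ r₃ r₄ r₁₃ r₁₄ r₂₃ r₂₄ r₃₄ (-1) (fun i => ((A i : ℝ))) = 0 :=
      le_antisymm (by linarith)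
        (Fnn2 r₁ r₂ r₃ r₄ r₁₃ r₁₄ r₂₃ r₂₄ r₃₄ h₁ h₂ h₃ h₄ h₁₃ h₁₄ h₂₃ h₂₄ h₃₄ A)
    rcases Fz2 r₁ r₂ r₃ r₄ r₁₃ r₁₄ r₂₃ r₂₄ r₃₄ h₁ h₂ h₃ h₄ h₁₃ h₁₄ h₂₃ h₂₄ h₃₄ A hFa with
      ⟨e1,e2,e3,e4⟩|⟨e1,e2,e3,e4⟩|⟨e1,e2,e3,e4⟩|⟨e1,e2,e3,e4⟩|⟨e1,e2,e3,e4⟩|⟨e1,e2,e3,e4⟩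
    · exact Or.inl (by rw [← castZ0]; funext i; fin_cases i <;> simp [Z0, e1, e2, e3, e4])
    · exact Or.inr (Or.inl (by rw [← castZ1]; funext i; fin_cases i <;> simp [Z1, e1, e2, e3, e4]))
    · exact Or.inr (Or.inr (Or.inl (by
        rw [← castZ2]; funext i; fin_cases i <;> simp [Z2, e1, e2, e3, e4])))
    · exact Or.inr (Or.inr (Or.inr (Or.inl (by
        rw [← castZ3]; funext i; fin_cases i <;> simp [Z3, e1, e2, e3, e4]))))
    · exact Or.inr (Or.inr (Or.inr (Or.inr (Or.inl (by
        rw [← castZ4']; funext i; fin_cases i <;> simp [Z4', e1, e2, e3, e4])))))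
    · exact Or.inr (Or.inr (Or.inr (Or.inr (Or.inr (by
        rw [← castZ5]; funext i; fin_cases i <;> simp [Z5, e1, e2, e3, e4])))))
  · intro hv
    have main : ∀ (Zk : Fin 4 → ℤ),
        Ffun r₁ r₂ r₃ r₄ r₁₃ r₁₄ r₂₃ r₂₄ r₃₄ (-1) (fun i => ((Zk i : ℝ))) = 0 →
        a = (fun i => ((Zk i : ℝ))) →
        a ∈ latticePts 4 ∧ ∀ b ∈ latticePts 4,
          (a - α) ⬝ᵥ (MV1V2 r₁ r₂ r₃ r₄ r₁₃ r₁₄ r₂₃ r₂₄ r₃₄).mulVec (a - α)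
            ≤ (b - α) ⬝ᵥ (MV1V2 r₁ r₂ r₃ r₄ r₁₃ r₁₄ r₂₃ r₂₄ r₃₄).mulVec (b - α) := by
      rintro Zk hFz rfl
      refine ⟨⟨Zk, rfl⟩, ?_⟩
      rintro b ⟨B, rfl⟩
      rw [key, key, hFz]
      have := Fnn2 r₁ r₂ r₃ r₄ r₁₃ r₁₄ r₂₃ r₂₄ r₃₄ h₁ h₂ h₃ h₄ h₁₃ h₁₄ h₂₃ h₂₄ h₃₄ B
      linarith
    rcases hv with rfl|rfl|rfl|rfl|rfl|rfl
    · exact main Z0 FZ0 castZ0.symm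
    · exact main Z1 FZ1 castZ1.symm
    · exact main Z2 FZ2 castZ2.symm
    · exact main Z3 FZ3 castZ3.symm
    · exact main Z4' FZ4' castZ4'.symm
    · exact main Z5 FZ5 castZ5.symm
end

lemma os1234 (x : Fin 4 → ℝ) (hc : x 0 ≤ 1) (h01 : x 1 ≤ x 0) (h12 : x 2 ≤ x 1)
    (h23 : x 3 ≤ x 2) (h3 : 0 ≤ x 3) :
    x ∈ convexHull ℝ ({0, stdV 4 0, stdV 4 0 + stdV 4 1,
      stdV 4 0 + stdV 4 1 + stdV 4 2,
      stdV 4 0 + stdV 4 1 + stdV 4 2 + stdV 4 3} : Set (Fin 4 → ℝ)) := by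
  refine mem_convexHull_of_exists_fintype (ι := Fin 5)
    ![1 - x 0, x 0 - x 1, x 1 - x 2, x 2 - x 3, x 3]
    ![0, stdV 4 0, stdV 4 0 + stdV 4 1, stdV 4 0 + stdV 4 1 + stdV 4 2,
      stdV 4 0 + stdV 4 1 + stdV 4 2 + stdV 4 3] ?_ ?_ ?_ ?_
  · intro i; fin_cases i <;> norm_num <;> linarith
  · rw [Fin.sum_univ_five]; norm_num [Matrix.cons_val_two, Matrix.cons_val_three, Matrix.cons_val_four]
  · intro i; fin_cases i <;> simp [Set.mem_insert_iff]
  · funext j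
    rw [Fin.sum_univ_five]
    fin_cases j <;> simp [stdV, Pi.single_apply] <;> (try ring)

lemma os2134 (x : Fin 4 → ℝ) (hc : x 1 ≤ 1) (h01 : x 0 ≤ x 1) (h12 : x 2 ≤ x 0)
    (h23 : x 3 ≤ x 2) (h3 : 0 ≤ x 3) :
    x ∈ convexHull ℝ ({0, stdV 4 1, stdV 4 1 + stdV 4 0,
      stdV 4 1 + stdV 4 0 + stdV 4 2,
      stdV 4 0 + stdV 4 1 + stdV 4 2 + stdV 4 3} : Set (Fin 4 → ℝ)) := by
  refine mem_convexHull_of_exists_fintype (ι := Fin 5)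
    ![1 - x 1, x 1 - x 0, x 0 - x 2, x 2 - x 3, x 3]
    ![0, stdV 4 1, stdV 4 1 + stdV 4 0, stdV 4 1 + stdV 4 0 + stdV 4 2,
      stdV 4 0 + stdV 4 1 + stdV 4 2 + stdV 4 3] ?_ ?_ ?_ ?_
  · intro i; fin_cases i <;> norm_num <;> linarith
  · rw [Fin.sum_univ_five]; norm_num [Matrix.cons_val_two, Matrix.cons_val_three, Matrix.cons_val_four]
  · intro i; fin_cases i <;> simp [Set.mem_insert_iff]
  · funext j
    rw [Fin.sum_univ_five]
    fin_cases j <;> simp [stdV, Pi.single_apply] <;> (try ring)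

lemma os1243 (x : Fin 4 → ℝ) (hc : x 0 ≤ 1) (h01 : x 1 ≤ x 0) (h12 : x 3 ≤ x 1)
    (h23 : x 2 ≤ x 3) (h3 : 0 ≤ x 2) :
    x ∈ convexHull ℝ ({0, stdV 4 0, stdV 4 0 + stdV 4 1,
      stdV 4 0 + stdV 4 1 + stdV 4 3,
      stdV 4 0 + stdV 4 1 + stdV 4 2 + stdV 4 3} : Set (Fin 4 → ℝ)) := by
  refine mem_convexHull_of_exists_fintype (ι := Fin 5)
    ![1 - x 0, x 0 - x 1, x 1 - x 3, x 3 - x 2, x 2]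
    ![0, stdV 4 0, stdV 4 0 + stdV 4 1, stdV 4 0 + stdV 4 1 + stdV 4 3,
      stdV 4 0 + stdV 4 1 + stdV 4 2 + stdV 4 3] ?_ ?_ ?_ ?_
  · intro i; fin_cases i <;> norm_num <;> linarith
  · rw [Fin.sum_univ_five]; norm_num [Matrix.cons_val_two, Matrix.cons_val_three, Matrix.cons_val_four]
  · intro i; fin_cases i <;> simp [Set.mem_insert_iff]
  · funext j
    rw [Fin.sum_univ_five]
    fin_cases j <;> simp [stdV, Pi.single_apply] <;> (try ring)

lemma os2143 (x : Fin 4 → ℝ) (hc : x 1 ≤ 1) (h01 : x 0 ≤ x 1) (h12 : x 3 ≤ x 0)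
    (h23 : x 2 ≤ x 3) (h3 : 0 ≤ x 2) :
    x ∈ convexHull ℝ ({0, stdV 4 1, stdV 4 1 + stdV 4 0,
      stdV 4 1 + stdV 4 0 + stdV 4 3,
      stdV 4 0 + stdV 4 1 + stdV 4 2 + stdV 4 3} : Set (Fin 4 → ℝ)) := by
  refine mem_convexHull_of_exists_fintype (ι := Fin 5)
    ![1 - x 1, x 1 - x 0, x 0 - x 3, x 3 - x 2, x 2]
    ![0, stdV 4 1, stdV 4 1 + stdV 4 0, stdV 4 1 + stdV 4 0 + stdV 4 3,
      stdV 4 0 + stdV 4 1 + stdV 4 2 + stdV 4 3] ?_ ?_ ?_ ?_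
  · intro i; fin_cases i <;> norm_num <;> linarith
  · rw [Fin.sum_univ_five]; norm_num [Matrix.cons_val_two, Matrix.cons_val_three, Matrix.cons_val_four]
  · intro i; fin_cases i <;> simp [Set.mem_insert_iff]
  · funext j
    rw [Fin.sum_univ_five]
    fin_cases j <;> simp [stdV, Pi.single_apply] <;> (try ring)

lemma convexP1 : Convex ℝ {x : Fin 4 → ℝ |
    x 0 ≤ 1 ∧ x 1 ≤ 1 ∧ x 2 ≤ x 0 ∧ x 2 ≤ x 1 ∧ x 3 ≤ x 2 ∧ 0 ≤ x 3} := by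
  intro u hu v hv a b ha hb hab
  obtain ⟨u1, u2, u3, u4, u5, u6⟩ := hu
  obtain ⟨v1, v2, v3, v4, v5, v6⟩ := hv
  refine ⟨?_, ?_, ?_, ?_, ?_, ?_⟩ <;>
    simp only [Pi.add_apply, Pi.smul_apply, smul_eq_mul] <;>
    nlinarith [mul_le_mul_of_nonneg_left u1 ha, mul_le_mul_of_nonneg_left v1 hb,
      mul_le_mul_of_nonneg_left u2 ha, mul_le_mul_of_nonneg_left v2 hb,
      mul_le_mul_of_nonneg_left u3 ha, mul_le_mul_of_nonneg_left v3 hb,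
      mul_le_mul_of_nonneg_left u4 ha, mul_le_mul_of_nonneg_left v4 hb,
      mul_le_mul_of_nonneg_left u5 ha, mul_le_mul_of_nonneg_left v5 hb,
      mul_le_mul_of_nonneg_left u6 ha, mul_le_mul_of_nonneg_left v6 hb]

lemma split1 :
    convexHull ℝ
      ({0, stdV 4 0, stdV 4 1, stdV 4 0 + stdV 4 1,
        stdV 4 0 + stdV 4 1 + stdV 4 2,
        stdV 4 0 + stdV 4 1 + stdV 4 2 + stdV 4 3} : Set (Fin 4 → ℝ)) =
      sigma4 0 1 2 ∪ sigma4 1 0 2 := by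
  apply Set.Subset.antisymm
  · have hsub : ({0, stdV 4 0, stdV 4 1, stdV 4 0 + stdV 4 1,
        stdV 4 0 + stdV 4 1 + stdV 4 2,
        stdV 4 0 + stdV 4 1 + stdV 4 2 + stdV 4 3} : Set (Fin 4 → ℝ)) ⊆
        {x : Fin 4 → ℝ | x 0 ≤ 1 ∧ x 1 ≤ 1 ∧ x 2 ≤ x 0 ∧ x 2 ≤ x 1 ∧ x 3 ≤ x 2 ∧ 0 ≤ x 3} := by
      intro y hy
      rcases hy with rfl|rfl|rfl|rfl|rfl|rfl <;>
        refine ⟨?_, ?_, ?_, ?_, ?_, ?_⟩ <;> simp [stdV, Pi.single_apply]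
    have hP := convexHull_min hsub convexP1
    intro x hx
    have hp := hP hx
    obtain ⟨p1, p2, p3, p4, p5, p6⟩ := hp
    rcases le_total (x 1) (x 0) with h | h
    · exact Or.inl (os1234 x p1 h p4 p5 p6)
    · exact Or.inr (os2134 x p2 h p3 p5 p6)
  · have e : stdV 4 1 + stdV 4 0 = stdV 4 0 + stdV 4 1 := add_comm _ _
    have e2 : stdV 4 1 + stdV 4 0 + stdV 4 2 = stdV 4 0 + stdV 4 1 + stdV 4 2 := by rw [e]
    apply Set.union_subset
    · apply convexHull_mono
      intro y hy
      simp only [Set.mem_insert_iff, Set.mem_singleton_iff] at hy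
      rcases hy with rfl|rfl|rfl|rfl|rfl <;> simp [Set.mem_insert_iff]
    · apply convexHull_mono
      intro y hy
      simp only [Set.mem_insert_iff, Set.mem_singleton_iff] at hy
      rcases hy with rfl|rfl|rfl|rfl|rfl
      · simp
      · simp
      · rw [e]; simp
      · rw [e2]; simp
      · simp

lemma convexP2 : Convex ℝ {x : Fin 4 → ℝ |
    x 0 ≤ 1 ∧ x 1 ≤ 1 ∧ x 3 ≤ x 0 ∧ x 3 ≤ x 1 ∧ x 2 ≤ x 3 ∧ 0 ≤ x 2} := by
  intro u hu v hv a b ha hb hab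
  obtain ⟨u1, u2, u3, u4, u5, u6⟩ := hu
  obtain ⟨v1, v2, v3, v4, v5, v6⟩ := hv
  refine ⟨?_, ?_, ?_, ?_, ?_, ?_⟩ <;>
    simp only [Pi.add_apply, Pi.smul_apply, smul_eq_mul] <;>
    nlinarith [mul_le_mul_of_nonneg_left u1 ha, mul_le_mul_of_nonneg_left v1 hb,
      mul_le_mul_of_nonneg_left u2 ha, mul_le_mul_of_nonneg_left v2 hb,
      mul_le_mul_of_nonneg_left u3 ha, mul_le_mul_of_nonneg_left v3 hb,
      mul_le_mul_of_nonneg_left u4 ha, mul_le_mul_of_nonneg_left v4 hb,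
      mul_le_mul_of_nonneg_left u5 ha, mul_le_mul_of_nonneg_left v5 hb,
      mul_le_mul_of_nonneg_left u6 ha, mul_le_mul_of_nonneg_left v6 hb]

lemma split2 :
    convexHull ℝ
      ({0, stdV 4 0, stdV 4 1, stdV 4 0 + stdV 4 1,
        stdV 4 0 + stdV 4 1 + stdV 4 3,
        stdV 4 0 + stdV 4 1 + stdV 4 2 + stdV 4 3} : Set (Fin 4 → ℝ)) =
      sigma4 0 1 3 ∪ sigma4 1 0 3 := by
  apply Set.Subset.antisymm
  · have hsub : ({0, stdV 4 0, stdV 4 1, stdV 4 0 + stdV 4 1,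
        stdV 4 0 + stdV 4 1 + stdV 4 3,
        stdV 4 0 + stdV 4 1 + stdV 4 2 + stdV 4 3} : Set (Fin 4 → ℝ)) ⊆
        {x : Fin 4 → ℝ | x 0 ≤ 1 ∧ x 1 ≤ 1 ∧ x 3 ≤ x 0 ∧ x 3 ≤ x 1 ∧ x 2 ≤ x 3 ∧ 0 ≤ x 2} := by
      intro y hy
      rcases hy with rfl|rfl|rfl|rfl|rfl|rfl <;>
        refine ⟨?_, ?_, ?_, ?_, ?_, ?_⟩ <;> simp [stdV, Pi.single_apply]
    have hP := convexHull_min hsub convexP2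
    intro x hx
    have hp := hP hx
    obtain ⟨p1, p2, p3, p4, p5, p6⟩ := hp
    rcases le_total (x 1) (x 0) with h | h
    · exact Or.inl (os1243 x p1 h p4 p5 p6)
    · exact Or.inr (os2143 x p2 h p3 p5 p6)
  · have e : stdV 4 1 + stdV 4 0 = stdV 4 0 + stdV 4 1 := add_comm _ _
    have e2 : stdV 4 1 + stdV 4 0 + stdV 4 3 = stdV 4 0 + stdV 4 1 + stdV 4 3 := by rw [e]
    apply Set.union_subset
    · apply convexHull_mono
      intro y hy
      simp only [Set.mem_insert_iff, Set.mem_singleton_iff] at hy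
      rcases hy with rfl|rfl|rfl|rfl|rfl <;> simp [Set.mem_insert_iff]
    · apply convexHull_mono
      intro y hy
      simp only [Set.mem_insert_iff, Set.mem_singleton_iff] at hy
      rcases hy with rfl|rfl|rfl|rfl|rfl
      · simp
      · simp
      · rw [e]; simp
      · rw [e2]; simp
      · simp

/-- For `B₀` in the relative interior of `V₁ ∩ V₂`, the set
`conv{0, s₁, s₂, s₁+s₂, s₁+s₂+s₃, s₁+s₂+s₃+s₄}` is a Delaunay cell, equal to
`σ₁₂₃₄ ∪ σ₂₁₃₄`; and similarly `conv{0, s₁, s₂, s₁+s₂, s₁+s₂+s₄, s₁+s₂+s₃+s₄}`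
is a Delaunay cell, equal to `σ₁₂₄₃ ∪ σ₂₁₄₃`. -/
theorem delaunay_fusion_V1_V2
    (r₁ r₂ r₃ r₄ r₁₃ r₁₄ r₂₃ r₂₄ r₃₄ : ℝ)
    (h₁ : 0 < r₁) (h₂ : 0 < r₂) (h₃ : 0 < r₃) (h₄ : 0 < r₄)
    (h₁₃ : 0 < r₁₃) (h₁₄ : 0 < r₁₄)
    (h₂₃ : 0 < r₂₃) (h₂₄ : 0 < r₂₄) (h₃₄ : 0 < r₃₄) :
    (IsDelaunayCell
      (fun x y => x ⬝ᵥ (MV1V2 r₁ r₂ r₃ r₄ r₁₃ r₁₄ r₂₃ r₂₄ r₃₄).mulVec y)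
      (convexHull ℝ
        {(0 : Fin 4 → ℝ), stdV 4 0, stdV 4 1, stdV 4 0 + stdV 4 1,
          stdV 4 0 + stdV 4 1 + stdV 4 2,
          stdV 4 0 + stdV 4 1 + stdV 4 2 + stdV 4 3}) ∧
      convexHull ℝ
        {(0 : Fin 4 → ℝ), stdV 4 0, stdV 4 1, stdV 4 0 + stdV 4 1,
          stdV 4 0 + stdV 4 1 + stdV 4 2,
          stdV 4 0 + stdV 4 1 + stdV 4 2 + stdV 4 3} =
        sigma4 0 1 2 ∪ sigma4 1 0 2) ∧
    (IsDelaunayCell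
      (fun x y => x ⬝ᵥ (MV1V2 r₁ r₂ r₃ r₄ r₁₃ r₁₄ r₂₃ r₂₄ r₃₄).mulVec y)
      (convexHull ℝ
        {(0 : Fin 4 → ℝ), stdV 4 0, stdV 4 1, stdV 4 0 + stdV 4 1,
          stdV 4 0 + stdV 4 1 + stdV 4 3,
          stdV 4 0 + stdV 4 1 + stdV 4 2 + stdV 4 3}) ∧
      convexHull ℝ
        {(0 : Fin 4 → ℝ), stdV 4 0, stdV 4 1, stdV 4 0 + stdV 4 1,
          stdV 4 0 + stdV 4 1 + stdV 4 3,
          stdV 4 0 + stdV 4 1 + stdV 4 2 + stdV 4 3} =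
        sigma4 0 1 3 ∪ sigma4 1 0 3) := by
  refine ⟨⟨?_, ?_⟩, ⟨?_, ?_⟩⟩
  · obtain ⟨α, hα⟩ := Msurj r₁ r₂ r₃ r₄ r₁₃ r₁₄ r₂₃ r₂₄ r₃₄ h₁ h₂ h₃ h₄ h₁₃ h₁₄ h₂₃ h₂₄ h₃₄ ((1/2 : ℝ) • wVec r₁ r₂ r₃ r₄ r₁₃ r₁₄ r₂₃ r₂₄ r₃₄ 1)
    refine ⟨α, ?_⟩
    have hms := minset1 r₁ r₂ r₃ r₄ r₁₃ r₁₄ r₂₃ r₂₄ r₃₄ h₁ h₂ h₃ h₄ h₁₃ h₁₄ h₂₃ h₂₄ h₃₄ α hα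
    simp only []
    rw [hms]
  · exact split1
  · obtain ⟨α, hα⟩ := Msurj r₁ r₂ r₃ r₄ r₁₃ r₁₄ r₂₃ r₂₄ r₃₄ h₁ h₂ h₃ h₄ h₁₃ h₁₄ h₂₃ h₂₄ h₃₄ ((1/2 : ℝ) • wVec r₁ r₂ r₃ r₄ r₁₃ r₁₄ r₂₃ r₂₄ r₃₄ (-1))
    refine ⟨α, ?_⟩
    have hms := minset2 r₁ r₂ r₃ r₄ r₁₃ r₁₄ r₂₃ r₂₄ r₃₄ h₁ h₂ h₃ h₄ h₁₃ h₁₄ h₂₃ h₂₄ h₃₄ α hα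
    simp only []
    rw [hms]
  · exact split2
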